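/- arXiv:2501.03083 — 5 statements merged into one kernel-verified Lean document; each statement's English description precedes it below -/
import Mathlib

section
/- Let d ≥ 1, m > 0, κ > 0, C > 0, and set α = d/(m d + 2), β = α/d, k = m α/(2 κ d). For every t > 0 and every x ∈ ℝ^d with C − k‖x‖² t^{−2β} > 0, the Barenblatt–Pattle function u_BP satisfies the Porous Medium Equation classically at (x,t): the time derivative ∂u_BP/∂t (x,t) equals κ times the spatial divergence of u_BP^m ∇_x u_BP evaluated at (x,t); equivalently, ∂u_BP/∂t (x,t) = (κ/(m+1)) Δ_x (u_BP^{m+1})(x,t), where Δ_x is the Laplacian in the space variable. -/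
/-- The Barenblatt–Pattle function, with parameters `α`, `β`, `k` given explicitly. -/
noncomputable def uBP (d : ℕ) (m C α β k : ℝ)
    (x : EuclideanSpace ℝ (Fin d)) (t : ℝ) : ℝ :=
  t ^ (-α) * (max (C - k * ‖x‖ ^ 2 * t ^ (-(2 * β))) 0) ^ (1 / m)

open Real Filter

lemma hasFDerivAt_pow_aux {d : ℕ} (b Cc p : ℝ) (y : EuclideanSpace ℝ (Fin d))
    (hy : 0 < Cc - b * ‖y‖ ^ 2) :
    HasFDerivAt (fun z : EuclideanSpace ℝ (Fin d) => (Cc - b * ‖z‖ ^ 2) ^ p)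
      ((p * (Cc - b * ‖y‖ ^ 2) ^ (p - 1) * (-2 * b)) • (innerSL ℝ y)) y := by
  have h0 : HasFDerivAt (fun z : EuclideanSpace ℝ (Fin d) => ‖z‖ ^ 2)
      ((2:ℝ) • innerSL ℝ y) y := by
    have := (hasStrictFDerivAt_norm_sq y).hasFDerivAt
    exact this.congr_fderiv (by ext v; simp)
  have h1 : HasFDerivAt (fun z : EuclideanSpace ℝ (Fin d) => Cc - b * ‖z‖ ^ 2)
      ((-b) • ((2:ℝ) • innerSL ℝ y)) y := by
    have := (hasFDerivAt_const Cc y).sub (h0.const_mul b)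
    exact this.congr_fderiv (by ext v; simp)
  have h2 := h1.rpow_const (p := p) (Or.inl hy.ne')
  have heq : (p * (Cc - b * ‖y‖ ^ 2) ^ (p - 1)) • ((-b) • ((2:ℝ) • innerSL ℝ y))
      = (p * (Cc - b * ‖y‖ ^ 2) ^ (p - 1) * (-2 * b)) • (innerSL ℝ y) := by
    rw [smul_smul, smul_smul]
    congr 1
    ring
  exact heq ▸ h2

lemma normsq_sum {d : ℕ} (x : EuclideanSpace ℝ (Fin d)) : ∑ i, x i ^ 2 = ‖x‖ ^ 2 := by
  rw [EuclideanSpace.norm_eq, Real.sq_sqrt (by positivity)]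
  simp [sq_abs]

lemma div_sum_aux {d : ℕ} (A b Cc p : ℝ) (x : EuclideanSpace ℝ (Fin d))
    (hx : 0 < Cc - b * ‖x‖ ^ 2) :
    ∑ i : Fin d,
      fderiv ℝ (fun y : EuclideanSpace ℝ (Fin d) => A * (Cc - b * ‖y‖ ^ 2) ^ p * y i)
        x (EuclideanSpace.single i 1)
    = A * (p * (Cc - b * ‖x‖ ^ 2) ^ (p - 1) * (-2 * b) * ‖x‖ ^ 2
        + (d : ℝ) * (Cc - b * ‖x‖ ^ 2) ^ p) := by
  have key : ∀ i : Fin d,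
      fderiv ℝ (fun y : EuclideanSpace ℝ (Fin d) => A * (Cc - b * ‖y‖ ^ 2) ^ p * y i)
        x (EuclideanSpace.single i 1)
      = A * (p * (Cc - b * ‖x‖ ^ 2) ^ (p - 1) * (-2 * b)) * x i * x i
        + A * (Cc - b * ‖x‖ ^ 2) ^ p := by
    intro i
    have h1 := ((hasFDerivAt_pow_aux b Cc p x hx).const_mul A).mul
      ((EuclideanSpace.proj (𝕜 := ℝ) i).hasFDerivAt (x := x))
    have h1' : HasFDerivAt
        (fun y : EuclideanSpace ℝ (Fin d) => A * (Cc - b * ‖y‖ ^ 2) ^ p * y i)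
        ((A * (Cc - b * ‖x‖ ^ 2) ^ p) • EuclideanSpace.proj i +
          (EuclideanSpace.proj i) x • A • (p * (Cc - b * ‖x‖ ^ 2) ^ (p - 1) * (-2 * b)) •
            (innerSL ℝ) x) x := h1
    rw [h1'.fderiv]
    simp [EuclideanSpace.inner_single_right]
    ring
  rw [Finset.sum_congr rfl (fun i _ => key i), Finset.sum_add_distrib]
  simp only [Finset.sum_const, Finset.card_univ, Fintype.card_fin, nsmul_eq_mul]
  have hgen : ∀ c : ℝ, ∑ i : Fin d, c * x i * x i = c * ‖x‖ ^ 2 := by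
    intro c
    rw [← normsq_sum x, Finset.mul_sum]
    exact Finset.sum_congr rfl (fun i _ => by ring)
  rw [hgen]
  ring

/-- Wherever `C − k‖x‖² t^{−2β} > 0`, the Barenblatt–Pattle function satisfies the
Porous Medium Equation classically: its time derivative equals κ times the spatial
divergence of `u^m ∇u`, equivalently `(κ/(m+1)) Δ (u^{m+1})`. -/
theorem barenblatt_solves_PME_classically
    (d : ℕ) (hd : 1 ≤ d) (m κ C α β k : ℝ)
    (hm : 0 < m) (hκ : 0 < κ) (hC : 0 < C)
    (hα : α = d / (m * d + 2)) (hβ : β = α / d) (hk : k = m * α / (2 * κ * d))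
    (t : ℝ) (ht : 0 < t) (x : EuclideanSpace ℝ (Fin d))
    (hx : 0 < C - k * ‖x‖ ^ 2 * t ^ (-(2 * β))) :
    deriv (fun s => uBP d m C α β k x s) t =
      ∑ i : Fin d,
        fderiv ℝ
          (fun y => κ * uBP d m C α β k y t ^ m *
            fderiv ℝ (fun z => uBP d m C α β k z t) y (EuclideanSpace.single i 1))
          x (EuclideanSpace.single i 1) ∧
    deriv (fun s => uBP d m C α β k x s) t =
      (κ / (m + 1)) *
        ∑ i : Fin d,
          fderiv ℝ
            (fun y =>
              fderiv ℝ (fun z => uBP d m C α β k z t ^ (m + 1)) y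
                (EuclideanSpace.single i 1))
            x (EuclideanSpace.single i 1) := by
  have hd' : (0:ℝ) < d := by exact_mod_cast hd
  have ht2 : (0:ℝ) < t ^ (-(2*β)) := Real.rpow_pos_of_pos ht _
  have ha : (0:ℝ) < t ^ (-α) := Real.rpow_pos_of_pos ht _
  set b : ℝ := k * t ^ (-(2*β)) with hb
  have hxb : 0 < C - b * ‖x‖ ^ 2 := by
    rw [show C - b * ‖x‖ ^ 2 = C - k * ‖x‖ ^ 2 * t ^ (-(2*β)) from by rw [hb]; ring]
    exact hx
  set P : Set (EuclideanSpace ℝ (Fin d)) := {y | 0 < C - b * ‖y‖ ^ 2} with hPdef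
  have hP : IsOpen P := isOpen_lt continuous_const (by fun_prop)
  have hxP : x ∈ P := hxb
  have hgy : ∀ y ∈ P, (0:ℝ) < C - b * ‖y‖ ^ 2 := fun y hy => hy
  -- uBP agrees with the smooth version on P
  have huBP : ∀ y ∈ P, uBP d m C α β k y t = t ^ (-α) * (C - b * ‖y‖ ^ 2) ^ (1/m) := by
    intro y hy
    simp only [uBP]
    rw [show k * ‖y‖ ^ 2 * t ^ (-(2*β)) = b * ‖y‖ ^ 2 from by rw [hb]; ring,
      max_eq_left (le_of_lt (hgy y hy))]
  -- spatial derivative of uBP on P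
  have hfd : ∀ y ∈ P, HasFDerivAt (fun z => uBP d m C α β k z t)
      ((t ^ (-α) * ((1/m) * (C - b * ‖y‖ ^ 2) ^ ((1/m) - 1) * (-2 * b))) • innerSL ℝ y) y := by
    intro y hy
    have hF := (hasFDerivAt_pow_aux b C (1/m) y (hgy y hy)).const_mul (t ^ (-α))
    rw [smul_smul] at hF
    have hev : (fun z => uBP d m C α β k z t)
        =ᶠ[nhds y] fun z => t ^ (-α) * (C - b * ‖z‖ ^ 2) ^ (1/m) :=
      eventuallyEq_of_mem (hP.mem_nhds hy) (fun z hz => huBP z hz)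
    exact hF.congr_of_eventuallyEq hev
  have hfdval : ∀ y ∈ P, ∀ i : Fin d,
      fderiv ℝ (fun z => uBP d m C α β k z t) y (EuclideanSpace.single i 1)
      = t ^ (-α) * ((1/m) * (C - b * ‖y‖ ^ 2) ^ ((1/m) - 1) * (-2 * b)) * y i := by
    intro y hy i
    rw [(hfd y hy).fderiv]
    simp [EuclideanSpace.inner_single_right]
  -- first summand on P
  have hA1 : ∀ i : Fin d, ∀ y ∈ P,
      κ * uBP d m C α β k y t ^ m *
        fderiv ℝ (fun z => uBP d m C α β k z t) y (EuclideanSpace.single i 1)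
      = (κ * (t ^ (-α)) ^ m * (t ^ (-α) * ((1/m) * (-2 * b))))
          * (C - b * ‖y‖ ^ 2) ^ (1/m) * y i := by
    intro i y hy
    rw [hfdval y hy i, huBP y hy]
    have hgpos := hgy y hy
    have e1 : ((C - b * ‖y‖ ^ 2) ^ (1/m)) ^ m = C - b * ‖y‖ ^ 2 := by
      rw [← Real.rpow_mul (le_of_lt hgpos), one_div, inv_mul_cancel₀ hm.ne', Real.rpow_one]
    have e2 : (C - b * ‖y‖ ^ 2) * (C - b * ‖y‖ ^ 2) ^ ((1/m) - 1)
        = (C - b * ‖y‖ ^ 2) ^ (1/m) := by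
      nth_rewrite 1 [← Real.rpow_one (C - b * ‖y‖ ^ 2)]
      rw [← Real.rpow_add hgpos]
      norm_num
    rw [Real.mul_rpow (le_of_lt ha) (Real.rpow_nonneg (le_of_lt hgpos) _), e1, ← e2]
    ring
  have hS1 : ∑ i : Fin d, fderiv ℝ (fun y => κ * uBP d m C α β k y t ^ m *
        fderiv ℝ (fun z => uBP d m C α β k z t) y (EuclideanSpace.single i 1))
        x (EuclideanSpace.single i 1)
      = (κ * (t ^ (-α)) ^ m * (t ^ (-α) * ((1/m) * (-2 * b)))) *
          ((1/m) * (C - b * ‖x‖ ^ 2) ^ ((1/m) - 1) * (-2 * b) * ‖x‖ ^ 2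
            + (d : ℝ) * (C - b * ‖x‖ ^ 2) ^ (1/m)) := by
    rw [← div_sum_aux (κ * (t ^ (-α)) ^ m * (t ^ (-α) * ((1/m) * (-2 * b)))) b C (1/m) x hxb]
    refine Finset.sum_congr rfl fun i _ => ?_
    rw [Filter.EventuallyEq.fderiv_eq
      (eventuallyEq_of_mem (hP.mem_nhds hxP) (fun y hy => hA1 i y hy))]
  -- second summand on P
  have hu2 : ∀ y ∈ P, uBP d m C α β k y t ^ (m+1)
      = (t ^ (-α)) ^ (m+1) * (C - b * ‖y‖ ^ 2) ^ ((1/m) * (m+1)) := by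
    intro y hy
    rw [huBP y hy, Real.mul_rpow (le_of_lt ha) (Real.rpow_nonneg (le_of_lt (hgy y hy)) _),
      ← Real.rpow_mul (le_of_lt (hgy y hy))]
  have hfd2 : ∀ y ∈ P, HasFDerivAt (fun z => uBP d m C α β k z t ^ (m+1))
      (((t ^ (-α)) ^ (m+1) * (((1/m)*(m+1)) * (C - b * ‖y‖ ^ 2) ^ (((1/m)*(m+1)) - 1)
        * (-2 * b))) • innerSL ℝ y) y := by
    intro y hy
    have hF := (hasFDerivAt_pow_aux b C ((1/m)*(m+1)) y (hgy y hy)).const_mul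
      ((t ^ (-α)) ^ (m+1))
    rw [smul_smul] at hF
    exact hF.congr_of_eventuallyEq
      (eventuallyEq_of_mem (hP.mem_nhds hy) (fun z hz => hu2 z hz))
  have hexp : (1/m) * (m+1) - 1 = 1/m := by field_simp; ring
  have hA2 : ∀ i : Fin d, ∀ y ∈ P,
      fderiv ℝ (fun z => uBP d m C α β k z t ^ (m+1)) y (EuclideanSpace.single i 1)
      = ((t ^ (-α)) ^ (m+1) * (((1/m)*(m+1)) * (-2 * b)))
          * (C - b * ‖y‖ ^ 2) ^ (1/m) * y i := by
    intro i y hy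
    rw [(hfd2 y hy).fderiv, ContinuousLinearMap.smul_apply,
      show ((innerSL ℝ) y) (EuclideanSpace.single i 1) = y i from by
        simp [EuclideanSpace.inner_single_right],
      smul_eq_mul, hexp]
    ring
  have hS2 : ∑ i : Fin d, fderiv ℝ
        (fun y => fderiv ℝ (fun z => uBP d m C α β k z t ^ (m+1)) y
          (EuclideanSpace.single i 1)) x (EuclideanSpace.single i 1)
      = ((t ^ (-α)) ^ (m+1) * (((1/m)*(m+1)) * (-2 * b))) *
          ((1/m) * (C - b * ‖x‖ ^ 2) ^ ((1/m) - 1) * (-2 * b) * ‖x‖ ^ 2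
            + (d : ℝ) * (C - b * ‖x‖ ^ 2) ^ (1/m)) := by
    rw [← div_sum_aux ((t ^ (-α)) ^ (m+1) * (((1/m)*(m+1)) * (-2 * b))) b C (1/m) x hxb]
    refine Finset.sum_congr rfl fun i _ => ?_
    rw [Filter.EventuallyEq.fderiv_eq
      (eventuallyEq_of_mem (hP.mem_nhds hxP) (fun y hy => hA2 i y hy))]
  -- time derivative
  have h1 : HasDerivAt (fun s : ℝ => s ^ (-α)) (-α * t ^ (-α - 1)) t :=
    Real.hasDerivAt_rpow_const (Or.inl ht.ne')
  have h2 : HasDerivAt (fun s : ℝ => s ^ (-(2*β))) (-(2*β) * t ^ (-(2*β) - 1)) t :=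
    Real.hasDerivAt_rpow_const (Or.inl ht.ne')
  have h3 : HasDerivAt (fun s : ℝ => C - k * ‖x‖ ^ 2 * s ^ (-(2*β)))
      (-(k * ‖x‖ ^ 2 * (-(2*β) * t ^ (-(2*β) - 1)))) t :=
    (h2.const_mul (k * ‖x‖ ^ 2)).const_sub C
  have h4 := h3.rpow_const (p := 1/m) (Or.inl hx.ne')
  have h5 := h1.mul h4
  have hevt : (fun s => uBP d m C α β k x s)
      =ᶠ[nhds t] fun s => s ^ (-α) * (C - k * ‖x‖ ^ 2 * s ^ (-(2*β))) ^ (1/m) := by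
    have hcont : ContinuousAt (fun s : ℝ => C - k * ‖x‖ ^ 2 * s ^ (-(2*β))) t := by
      have hc := Real.continuousAt_rpow_const t (-(2*β)) (Or.inl ht.ne')
      exact continuousAt_const.sub (hc.const_mul _)
    have hmem := hcont (Ioi_mem_nhds hx)
    filter_upwards [hmem] with s hs
    simp only [uBP]
    rw [max_eq_left (le_of_lt hs)]
  have hderiv : deriv (fun s => uBP d m C α β k x s) t
      = -α * t ^ (-α - 1) * (C - k * ‖x‖ ^ 2 * t ^ (-(2*β))) ^ (1/m)
        + t ^ (-α) * (-(k * ‖x‖ ^ 2 * (-(2*β) * t ^ (-(2*β) - 1))) * (1/m)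
            * (C - k * ‖x‖ ^ 2 * t ^ (-(2*β))) ^ ((1/m) - 1)) := by
    rw [hevt.deriv_eq]; exact h5.deriv
  -- algebraic preliminaries
  have hmd : (0:ℝ) < m * d + 2 := by positivity
  have hsum : α * m + 2 * β = 1 := by
    rw [hβ, hα]
    field_simp
  have e1 : t ^ (-α - 1) = t ^ (-α) * t⁻¹ := by
    rw [show -α - 1 = -α + (-1) from by ring, Real.rpow_add ht, Real.rpow_neg_one]
  have e2 : t ^ (-(2*β) - 1) = t ^ (-(2*β)) * t⁻¹ := by
    rw [show -(2*β) - 1 = -(2*β) + (-1) from by ring, Real.rpow_add ht, Real.rpow_neg_one]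
  have e3 : (t ^ (-α)) ^ m = t ^ (-(α * m)) := by
    rw [← Real.rpow_mul (le_of_lt ht), neg_mul]
  have e4 : t ^ (-(α * m)) * t ^ (-(2*β)) = t⁻¹ := by
    rw [← Real.rpow_add ht, show -(α*m) + -(2*β) = -1 from by linarith [hsum],
      Real.rpow_neg_one]
  have e5 : (C - b * ‖x‖ ^ 2) ^ (1/m)
      = (C - b * ‖x‖ ^ 2) ^ ((1/m) - 1) * (C - b * ‖x‖ ^ 2) := by
    nth_rewrite 1 [show (1/m : ℝ) = ((1/m) - 1) + 1 from by ring]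
    rw [Real.rpow_add hxb, Real.rpow_one]
  have hgx : C - k * ‖x‖ ^ 2 * t ^ (-(2*β)) = C - b * ‖x‖ ^ 2 := by rw [hb]; ring
  constructor
  · rw [hderiv, hS1, hgx, e1, e2, e3, e5, hb, ← e4, hβ, hk]
    field_simp
    ring
  · have e6 : (t ^ (-α)) ^ (m+1) = t ^ (-(α * m)) * t ^ (-α) := by
      rw [← Real.rpow_mul (le_of_lt ht), show -α*(m+1) = -(α*m) + -α from by ring,
        Real.rpow_add ht]
    rw [hderiv, hS2, hgx, e1, e2, e6, e5, hb, ← e4, hβ, hk]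
    have hm1 : m + 1 ≠ 0 := by positivity
    field_simp
    ring
end

section
/- Let d ≥ 1, m > 0, κ > 0, C > 0, and set α = d/(m d + 2), β = α/d, k = m α/(2 κ d), f(t) = (C/k)^{1/2} t^{β}. For every t > 0, the topological support of the function x ↦ u_BP(x,t) equals the closed Euclidean ball of radius f(t) centered at the origin (in particular it is compact), and the topological frontier of the positivity set {x : u_BP(x,t) > 0} equals the sphere {x ∈ ℝ^d : ‖x‖ = f(t)}. -/
/-- At each time `t > 0`, the topological support of the Barenblatt–Pattle profile is the
closed ball of radius `f(t) = (C/k)^{1/2} t^β` (in particular it is compact), and the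
frontier of its positivity set is the sphere of radius `f(t)`. -/
theorem barenblatt_support_and_interface
    (d : ℕ) (hd : 1 ≤ d) (m κ C α β k : ℝ)
    (hm : 0 < m) (hκ : 0 < κ) (hC : 0 < C)
    (hα : α = d / (m * d + 2)) (hβ : β = α / d) (hk : k = m * α / (2 * κ * d))
    (t : ℝ) (ht : 0 < t) :
    tsupport (fun x : EuclideanSpace ℝ (Fin d) => uBP d m C α β k x t) =
      Metric.closedBall (0 : EuclideanSpace ℝ (Fin d)) ((C / k) ^ ((1 : ℝ) / 2) * t ^ β) ∧
    IsCompact (tsupport (fun x : EuclideanSpace ℝ (Fin d) => uBP d m C α β k x t)) ∧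
    frontier {x : EuclideanSpace ℝ (Fin d) | 0 < uBP d m C α β k x t} =
      Metric.sphere (0 : EuclideanSpace ℝ (Fin d)) ((C / k) ^ ((1 : ℝ) / 2) * t ^ β) := by
  have hd' : (0 : ℝ) < d := by
    have : (1 : ℝ) ≤ d := by exact_mod_cast hd
    linarith
  have hα' : 0 < α := by
    rw [hα]; positivity
  have hk' : 0 < k := by
    rw [hk]; positivity
  set R : ℝ := (C / k) ^ ((1 : ℝ) / 2) * t ^ β with hR
  have hR' : 0 < R := by
    apply mul_pos
    · exact Real.rpow_pos_of_pos (by positivity) _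
    · exact Real.rpow_pos_of_pos ht _
  have hsq : R ^ 2 = (C / k) * t ^ (2 * β) := by
    have e1 : ((C / k) ^ ((1 : ℝ) / 2)) ^ (2 : ℕ) = C / k := by
      rw [← Real.rpow_natCast _ 2, ← Real.rpow_mul (by positivity : (0:ℝ) ≤ C / k)]
      norm_num
    have e2 : (t ^ β) ^ (2 : ℕ) = t ^ (2 * β) := by
      rw [← Real.rpow_natCast _ 2, ← Real.rpow_mul ht.le, mul_comm]
      norm_num
    rw [hR, mul_pow, e1, e2]
  -- positivity iff inside the ball
  have key : ∀ x : EuclideanSpace ℝ (Fin d),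
      (0 < uBP d m C α β k x t ↔ ‖x‖ < R) := by
    intro x
    unfold uBP
    have htα : 0 < t ^ (-α) := Real.rpow_pos_of_pos ht _
    have htβ : 0 < t ^ (-(2 * β)) := Real.rpow_pos_of_pos ht _
    constructor
    · intro h
      have hM : 0 < max (C - k * ‖x‖ ^ 2 * t ^ (-(2 * β))) 0 := by
        by_contra hc
        push_neg at hc
        have : max (C - k * ‖x‖ ^ 2 * t ^ (-(2 * β))) 0 = 0 :=
          le_antisymm hc (le_max_right _ _)
        rw [this, Real.zero_rpow (by positivity : (1 : ℝ) / m ≠ 0)] at h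
        simp at h
      have hv : 0 < C - k * ‖x‖ ^ 2 * t ^ (-(2 * β)) := by
        rcases lt_max_iff.mp hM with h1 | h1
        · exact h1
        · exact absurd h1 (lt_irrefl 0)
      -- derive ‖x‖ < R
      have h2 : k * ‖x‖ ^ 2 * t ^ (-(2 * β)) < C := by linarith
      have h3 : ‖x‖ ^ 2 < R ^ 2 := by
        rw [hsq]
        have ht2 : t ^ (-(2 * β)) = (t ^ (2 * β))⁻¹ := by
          rw [← Real.rpow_neg ht.le]
        rw [ht2, ← div_eq_mul_inv] at h2
        have htp : 0 < t ^ (2 * β) := Real.rpow_pos_of_pos ht _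
        have h2' : k * ‖x‖ ^ 2 < C * t ^ (2 * β) := (div_lt_iff₀ htp).mp h2
        rw [div_mul_eq_mul_div, lt_div_iff₀ hk', mul_comm]
        exact h2'
      exact lt_of_pow_lt_pow_left₀ 2 hR'.le h3
    · intro h
      have h3 : ‖x‖ ^ 2 < R ^ 2 := by
        apply pow_lt_pow_left₀ h (norm_nonneg x)
        norm_num
      rw [hsq] at h3
      have htp : 0 < t ^ (2 * β) := Real.rpow_pos_of_pos ht _
      have hv : 0 < C - k * ‖x‖ ^ 2 * t ^ (-(2 * β)) := by
        have ht2 : t ^ (-(2 * β)) = (t ^ (2 * β))⁻¹ := by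
          rw [← Real.rpow_neg ht.le]
        rw [ht2, ← div_eq_mul_inv, sub_pos]
        rw [div_mul_eq_mul_div, lt_div_iff₀ hk'] at h3
        rw [div_lt_iff₀ htp, mul_comm]
        exact h3
      have hM : 0 < max (C - k * ‖x‖ ^ 2 * t ^ (-(2 * β))) 0 :=
        lt_max_iff.mpr (Or.inl hv)
      exact mul_pos htα (Real.rpow_pos_of_pos hM _)
  have hnn : ∀ x : EuclideanSpace ℝ (Fin d), 0 ≤ uBP d m C α β k x t := by
    intro x
    unfold uBP
    have : (0:ℝ) ≤ max (C - k * ‖x‖ ^ 2 * t ^ (-(2 * β))) 0 := le_max_right _ _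
    positivity
  have hset : {x : EuclideanSpace ℝ (Fin d) | 0 < uBP d m C α β k x t}
      = Metric.ball (0 : EuclideanSpace ℝ (Fin d)) R := by
    ext x
    simp [Metric.mem_ball, dist_zero_right, key x]
  have hsupp : Function.support (fun x : EuclideanSpace ℝ (Fin d) => uBP d m C α β k x t)
      = Metric.ball (0 : EuclideanSpace ℝ (Fin d)) R := by
    rw [← hset]
    ext x
    simp only [Function.mem_support, Set.mem_setOf_eq]
    constructor
    · intro h
      exact lt_of_le_of_ne (hnn x) (Ne.symm h)
    · intro h
      exact h.ne'
  have h1 : tsupport (fun x : EuclideanSpace ℝ (Fin d) => uBP d m C α β k x t)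
      = Metric.closedBall (0 : EuclideanSpace ℝ (Fin d)) R := by
    rw [tsupport, hsupp, closure_ball _ hR'.ne']
  refine ⟨h1, ?_, ?_⟩
  · rw [h1]; exact isCompact_closedBall _ _
  · rw [hset, frontier_ball _ hR'.ne']
end

section
/- Let d ≥ 1, κ > 0, C > 0 and 0 < m < 1, and set α = d/(m d + 2), β = α/d, k = m α/(2 κ d), f(t) = (C/k)^{1/2} t^{β}. Then for every t > 0 the function x ↦ u_BP(x,t) is differentiable at every point of ℝ^d; moreover its derivative vanishes at every interface point x with ‖x‖ = f(t), and the derivative map x ↦ D(u_BP(·,t))(x) is continuous on ℝ^d (i.e., u_BP(·,t) is C¹). -/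
open Real Filter Asymptotics

private lemma maxRpow_split {p : ℝ} (hp : 1 < p) (y : ℝ) :
    max y 0 ^ p = max y 0 ^ (p - 1) * max y 0 := by
  rcases le_or_gt y 0 with h | h
  · rw [max_eq_right h, mul_zero, Real.zero_rpow (by linarith)]
  · rw [max_eq_left h.le]
    conv_lhs => rw [show p = (p - 1) + 1 by ring]
    rw [Real.rpow_add h, Real.rpow_one]

private lemma maxRpow_cont {q : ℝ} (hq : 0 ≤ q) :
    Continuous (fun y : ℝ => max y 0 ^ q) := by
  rw [continuous_iff_continuousAt]
  intro s
  exact (Real.continuousAt_rpow_const _ _ (Or.inr hq)).comp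
    ((continuous_id.max continuous_const).continuousAt)

private lemma maxRpow_hasDerivAt {p : ℝ} (hp : 1 < p) (s : ℝ) :
    HasDerivAt (fun y : ℝ => max y 0 ^ p) (p * max s 0 ^ (p - 1)) s := by
  rcases lt_trichotomy s 0 with h | h | h
  · have hev : (fun y : ℝ => max y 0 ^ p) =ᶠ[nhds s] fun _ => (0 : ℝ) := by
      filter_upwards [Iio_mem_nhds h] with y hy
      rw [max_eq_right (le_of_lt hy), Real.zero_rpow (by linarith)]
    have h0 : p * max s 0 ^ (p - 1) = 0 := by
      rw [max_eq_right h.le, Real.zero_rpow (by linarith), mul_zero]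
    rw [h0]
    exact (hasDerivAt_const s (0 : ℝ)).congr_of_eventuallyEq hev
  · subst h
    have h0 : p * max (0 : ℝ) 0 ^ (p - 1) = 0 := by
      rw [max_self, Real.zero_rpow (by linarith), mul_zero]
    rw [h0, hasDerivAt_iff_isLittleO]
    have hO : (fun y : ℝ => max y 0) =O[nhds (0 : ℝ)] fun y => y := by
      apply Asymptotics.isBigO_of_le
      intro y
      rcases le_or_gt y 0 with hy | hy
      · simp [max_eq_right hy]
      · simp [max_eq_left hy.le]
    have hcont : Filter.Tendsto (fun y : ℝ => max y 0 ^ (p - 1)) (nhds 0) (nhds 0) := by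
      have h2 : ContinuousAt (fun y : ℝ => max y 0 ^ (p - 1)) 0 :=
        (maxRpow_cont (by linarith : (0:ℝ) ≤ p - 1)).continuousAt
      have := h2.tendsto
      simpa [max_self, Real.zero_rpow (show p - 1 ≠ 0 by linarith)] using this
    have ho : (fun y : ℝ => max y 0 ^ (p - 1)) =o[nhds (0 : ℝ)] fun _ => (1 : ℝ) :=
      Asymptotics.isLittleO_one_iff ℝ |>.mpr hcont
    have hmul := ho.mul_isBigO hO
    have heq : (fun y : ℝ => max y 0 ^ (p - 1) * max y 0) = fun y => max y 0 ^ p :=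
      funext fun y => (maxRpow_split hp y).symm
    rw [heq] at hmul
    apply hmul.congr'
    · filter_upwards with y
      simp [Real.zero_rpow (show p ≠ 0 by linarith)]
    · filter_upwards with y
      simp
  · have hev : (fun y : ℝ => max y 0 ^ p) =ᶠ[nhds s] fun y => y ^ p := by
      filter_upwards [Ioi_mem_nhds h] with y hy
      rw [max_eq_left (le_of_lt hy)]
    have h0 : p * max s 0 ^ (p - 1) = p * s ^ (p - 1) := by rw [max_eq_left h.le]
    rw [h0]
    exact (Real.hasDerivAt_rpow_const (Or.inl h.ne')).congr_of_eventuallyEq hev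

/-- For `0 < m < 1`, the Barenblatt–Pattle profile at each time `t > 0` is differentiable
everywhere, its derivative vanishes at interface points `‖x‖ = f(t)`, and the derivative
map is continuous (the profile is `C¹`). -/
theorem barenblatt_C1_for_m_lt_one
    (d : ℕ) (hd : 1 ≤ d) (m κ C α β k : ℝ)
    (hm : 0 < m) (hm1 : m < 1) (hκ : 0 < κ) (hC : 0 < C)
    (hα : α = d / (m * d + 2)) (hβ : β = α / d) (hk : k = m * α / (2 * κ * d))
    (t : ℝ) (ht : 0 < t) :
    (∀ x : EuclideanSpace ℝ (Fin d),
      DifferentiableAt ℝ (fun y => uBP d m C α β k y t) x) ∧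
    (∀ x : EuclideanSpace ℝ (Fin d), ‖x‖ = (C / k) ^ ((1 : ℝ) / 2) * t ^ β →
      fderiv ℝ (fun y => uBP d m C α β k y t) x = 0) ∧
    Continuous (fun x : EuclideanSpace ℝ (Fin d) =>
      fderiv ℝ (fun y => uBP d m C α β k y t) x) := by
  have hd' : (1 : ℝ) ≤ (d : ℝ) := by exact_mod_cast hd
  have hdpos : (0 : ℝ) < d := by linarith
  have hα0 : 0 < α := by
    rw [hα]; exact div_pos hdpos (by positivity)
  have hk0 : 0 < k := by rw [hk]; positivity
  set p : ℝ := 1 / m with hp_def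
  have hp : 1 < p := one_lt_one_div hm hm1
  set a : ℝ := k * t ^ (-(2 * β)) with ha
  have hfun : (fun y : EuclideanSpace ℝ (Fin d) => uBP d m C α β k y t)
      = fun y => t ^ (-α) * max (C - a * ‖y‖ ^ 2) 0 ^ p := by
    funext y
    unfold uBP
    rw [mul_right_comm k (‖y‖ ^ 2) (t ^ (-(2 * β)))]
  set S : EuclideanSpace ℝ (Fin d) → ℝ :=
    fun x => t ^ (-α) * (p * max (C - a * ‖x‖ ^ 2) 0 ^ (p - 1)) * (-(2 * a)) with hS
  have key : ∀ x : EuclideanSpace ℝ (Fin d),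
      HasFDerivAt (fun y : EuclideanSpace ℝ (Fin d) => t ^ (-α) * max (C - a * ‖y‖ ^ 2) 0 ^ p)
        (S x • innerSL ℝ x) x := by
    intro x
    have h1 : HasFDerivAt (fun y : EuclideanSpace ℝ (Fin d) => ‖y‖ ^ 2)
        (2 • innerSL ℝ x) x := (hasStrictFDerivAt_norm_sq x).hasFDerivAt
    have h2 : HasFDerivAt (fun y : EuclideanSpace ℝ (Fin d) => C - a * ‖y‖ ^ 2)
        (-(a • (2 • innerSL ℝ x))) x := (h1.const_mul a).const_sub C
    have h3 := (maxRpow_hasDerivAt hp (C - a * ‖x‖ ^ 2)).comp_hasFDerivAt x h2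
    have h4 := h3.const_mul (t ^ (-α))
    refine h4.congr_fderiv ?_
    ext y
    simp only [hS, ContinuousLinearMap.smul_apply, ContinuousLinearMap.neg_apply,
      ContinuousLinearMap.coe_smul', Pi.smul_apply, smul_eq_mul]
    push_cast
    ring
  refine ⟨?_, ?_, ?_⟩
  · intro x
    rw [hfun]
    exact (key x).differentiableAt
  · intro x hx
    have hsq : a * ‖x‖ ^ 2 = C := by
      have h1 : ((C / k) ^ ((1 : ℝ) / 2)) ^ 2 = C / k := by
        rw [← Real.rpow_natCast ((C / k) ^ ((1 : ℝ) / 2)) 2,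
          ← Real.rpow_mul (div_pos hC hk0).le]
        norm_num
      have h2 : (t ^ β) ^ 2 = t ^ (2 * β) := by
        rw [← Real.rpow_natCast (t ^ β) 2, ← Real.rpow_mul ht.le]
        norm_num
        ring_nf
      have h3 : t ^ (-(2 * β)) * t ^ (2 * β) = 1 := by
        rw [← Real.rpow_add ht]
        norm_num
      rw [hx, mul_pow, h1, h2, ha]
      rw [show k * t ^ (-(2 * β)) * (C / k * t ^ (2 * β))
          = C * (t ^ (-(2 * β)) * t ^ (2 * β)) * (k / k) by ring, h3,
        div_self hk0.ne']
      ring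
    rw [hfun, (key x).fderiv]
    have hS0 : S x = 0 := by
      simp only [hS]
      rw [show C - a * ‖x‖ ^ 2 = 0 by rw [hsq]; ring, max_self,
        Real.zero_rpow (show p - 1 ≠ 0 by linarith)]
      ring
    rw [hS0, zero_smul]
  · rw [hfun]
    have heq : (fun x : EuclideanSpace ℝ (Fin d) =>
        fderiv ℝ (fun y => t ^ (-α) * max (C - a * ‖y‖ ^ 2) 0 ^ p) x)
        = fun x => S x • innerSL ℝ x := funext fun x => (key x).fderiv
    rw [heq]
    have hScont : Continuous S := by
      apply Continuous.mul
      apply Continuous.mul continuous_const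
      · exact continuous_const.mul ((maxRpow_cont (by linarith : (0:ℝ) ≤ p - 1)).comp
          (continuous_const.sub (continuous_const.mul (continuous_norm.pow 2))))
      · exact continuous_const
    exact hScont.smul (innerSL ℝ).continuous
end

section
/- Let d ≥ 1, κ > 0, C > 0 and m ≥ 1, and set α = d/(m d + 2), β = α/d, k = m α/(2 κ d), f(t) = (C/k)^{1/2} t^{β}. Then for every t > 0 and every interface point x₀ ∈ ℝ^d with ‖x₀‖ = f(t), the function x ↦ u_BP(x,t) is NOT differentiable at x₀; the Barenblatt–Pattle solution is only continuous, not C¹, across its interface. -/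
private lemma bp_aux (s : ℝ) (h1 : -1 ≤ s) (h2 : s < 0) : -s ≤ 1 - (1 + s) ^ 2 := by
  nlinarith [mul_nonneg (neg_nonneg.mpr h2.le) (by linarith : (0:ℝ) ≤ 1 + s)]

/-- For `m ≥ 1`, the Barenblatt–Pattle profile at each time `t > 0` is not differentiable
at any interface point `‖x₀‖ = f(t)`: the solution is only continuous, not `C¹`, across
its interface. -/
theorem barenblatt_not_differentiable_at_interface
    (d : ℕ) (hd : 1 ≤ d) (m κ C α β k : ℝ)
    (hm : 1 ≤ m) (hκ : 0 < κ) (hC : 0 < C)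
    (hα : α = d / (m * d + 2)) (hβ : β = α / d) (hk : k = m * α / (2 * κ * d))
    (t : ℝ) (ht : 0 < t) (x₀ : EuclideanSpace ℝ (Fin d))
    (hx₀ : ‖x₀‖ = (C / k) ^ ((1 : ℝ) / 2) * t ^ β) :
    ¬ DifferentiableAt ℝ (fun y => uBP d m C α β k y t) x₀ := by
  intro hdiff
  have hd' : (1:ℝ) ≤ (d:ℝ) := by exact_mod_cast hd
  have hm0 : (0:ℝ) < m := by linarith
  have hαpos : 0 < α := by
    rw [hα]; apply div_pos (by linarith) (by nlinarith)
  have hkpos : 0 < k := by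
    rw [hk]; apply div_pos (by nlinarith) (by nlinarith)
  have htα : 0 < t ^ (-α) := Real.rpow_pos_of_pos ht _
  -- key identity
  have hkey : k * ‖x₀‖ ^ 2 * t ^ (-(2 * β)) = C := by
    have h1 : ‖x₀‖ ^ 2 = (C / k) * t ^ (2 * β) := by
      rw [hx₀, mul_pow, ← Real.rpow_natCast ((C/k) ^ ((1:ℝ)/2)) 2,
        ← Real.rpow_natCast (t ^ β) 2, ← Real.rpow_mul (by positivity),
        ← Real.rpow_mul ht.le]
      norm_num [mul_comm β 2]
    rw [h1]
    have h2 : t ^ (2 * β) * t ^ (-(2 * β)) = 1 := by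
      rw [← Real.rpow_add ht]; simp
    field_simp
    nlinarith [h2]
  set A := t ^ (-α) * C with hA
  have hApos : 0 < A := by positivity
  set φ : ℝ → ℝ := fun s => uBP d m C α β k ((1 + s) • x₀) t with hφdef
  have hφ : ∀ s, φ s = t ^ (-α) * (max (C * (1 - (1 + s) ^ 2)) 0) ^ (1 / m) := by
    intro s
    simp only [hφdef, uBP, norm_smul, Real.norm_eq_abs, mul_pow, sq_abs]
    congr 3
    nlinarith [hkey]
  have hφ0 : φ 0 = 0 := by
    have h := hφ 0
    norm_num at h
    rw [h, Real.zero_rpow (inv_ne_zero hm0.ne'), mul_zero]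
  -- φ differentiable at 0
  have hline : DifferentiableAt ℝ (fun s : ℝ => (1 + s) • x₀) 0 :=
    ((differentiableAt_const (1:ℝ)).add differentiableAt_id).smul_const x₀
  have hφdiff : DifferentiableAt ℝ φ 0 := by
    have h2 : DifferentiableAt ℝ (fun y => uBP d m C α β k y t)
        ((fun s : ℝ => (1 + s) • x₀) 0) := by simpa using hdiff
    have h3 := h2.comp 0 hline
    exact h3
  have hT : Filter.Tendsto (slope φ 0) (nhdsWithin 0 {(0:ℝ)}ᶜ) (nhds (deriv φ 0)) :=
    hasDerivAt_iff_tendsto_slope.mp hφdiff.hasDerivAt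
  -- derivative is 0 (right limit)
  have hright : Filter.Tendsto (slope φ 0) (nhdsWithin 0 (Set.Ioi 0)) (nhds (deriv φ 0)) :=
    hT.mono_left (nhdsWithin_mono _ (fun x hx => ne_of_gt hx))
  have hzero_right : ∀ s : ℝ, 0 < s → slope φ 0 s = 0 := by
    intro s hs
    have : φ s = 0 := by
      rw [hφ]
      have : max (C * (1 - (1 + s) ^ 2)) 0 = 0 := by
        apply max_eq_right
        nlinarith [mul_pos hC hs, mul_nonneg hC.le (sq_nonneg s)]
      rw [this, Real.zero_rpow (by positivity), mul_zero]
    simp [slope_def_field, this, hφ0]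
  have hc0 : deriv φ 0 = 0 := by
    have h1 : Filter.Tendsto (slope φ 0) (nhdsWithin 0 (Set.Ioi 0)) (nhds 0) := by
      apply Filter.Tendsto.congr' _ tendsto_const_nhds
      filter_upwards [self_mem_nhdsWithin] with s hs
      exact (hzero_right s hs).symm
    exact tendsto_nhds_unique hright h1
  -- left limit: slope bounded away from 0
  have hleft : Filter.Tendsto (slope φ 0) (nhdsWithin 0 (Set.Iio 0)) (nhds 0) := by
    have h := hT.mono_left (nhdsWithin_mono (0:ℝ)
      (fun x (hx : x ∈ Set.Iio (0:ℝ)) => ne_of_lt hx))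
    rwa [hc0] at h
  have hev : ∀ᶠ s in nhdsWithin 0 (Set.Iio 0), |slope φ 0 s| < A := by
    have := Metric.tendsto_nhds.mp hleft A hApos
    simpa [Real.dist_eq] using this
  have hlow : ∀ᶠ s in nhdsWithin 0 (Set.Iio 0), A ≤ |slope φ 0 s| := by
    have hδ : (0:ℝ) < min 1 (1/C) := by positivity
    have hmem : Set.Ioo (-(min 1 (1/C))) 0 ∈ nhdsWithin (0:ℝ) (Set.Iio 0) :=
      Ioo_mem_nhdsLT_of_mem ⟨by linarith, le_refl _⟩
    filter_upwards [hmem] with s hs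
    obtain ⟨hs1, hs2⟩ := hs
    set ε := -s with hε
    have hε0 : 0 < ε := by simp [hε]; linarith
    have hεδ : ε < min 1 (1/C) := by show -s < min 1 (1/C); linarith
    have hε1 : ε ≤ 1 := le_of_lt (lt_of_lt_of_le hεδ (min_le_left _ _))
    have hεC : C * ε ≤ 1 := by
      have h3 : C * ε < C * (1/C) :=
        mul_lt_mul_of_pos_left (lt_of_lt_of_le hεδ (min_le_right _ _)) hC
      rw [mul_one_div_cancel hC.ne'] at h3
      exact h3.le
    -- inner argument bound
    have hs3 : -1 ≤ s := by rw [hε] at hε1; linarith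
    have harg : C * ε ≤ C * (1 - (1 + s) ^ 2) := by
      have h4 : ε ≤ 1 - (1 + s) ^ 2 := by rw [hε]; exact bp_aux s hs3 hs2
      exact mul_le_mul_of_nonneg_left h4 hC.le
    have hCε : 0 < C * ε := by positivity
    have hmaxeq : max (C * (1 - (1 + s) ^ 2)) 0 = C * (1 - (1 + s) ^ 2) :=
      max_eq_left (hCε.le.trans harg)
    have hφlow : A * ε ≤ φ s := by
      rw [hφ, hmaxeq, hA]
      have h1 : (C * ε) ^ ((1:ℝ)/m) ≤ (C * (1 - (1 + s) ^ 2)) ^ ((1:ℝ)/m) :=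
        Real.rpow_le_rpow hCε.le harg (by positivity)
      have h2 : C * ε ≤ (C * ε) ^ ((1:ℝ)/m) := by
        calc C * ε = (C * ε) ^ ((1:ℝ)) := by rw [Real.rpow_one]
          _ ≤ (C * ε) ^ ((1:ℝ)/m) := Real.rpow_le_rpow_of_exponent_ge hCε hεC
              (by rw [div_le_one hm0]; linarith)
      calc t ^ (-α) * C * ε = t ^ (-α) * (C * ε) := by ring
        _ ≤ t ^ (-α) * (C * ε) ^ ((1:ℝ)/m) := mul_le_mul_of_nonneg_left h2 htα.le
        _ ≤ t ^ (-α) * (C * (1 - (1 + s) ^ 2)) ^ ((1:ℝ)/m) :=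
            mul_le_mul_of_nonneg_left h1 htα.le
    have hφnn : 0 ≤ φ s := by rw [hφ]; positivity
    have hslope : |slope φ 0 s| = φ s / ε := by
      rw [slope_def_field, hφ0, sub_zero, sub_zero, abs_div,
        abs_of_nonneg hφnn, abs_of_neg hs2]
    rw [hslope, le_div_iff₀ hε0]
    linarith [hφlow]
  obtain ⟨s, h1, h2⟩ := (hev.and hlow).exists
  exact lt_irrefl _ (h2.trans_lt h1)
end

section
/- Let d ≥ 1, m > 0, κ > 0, C > 0, and set α = d/(m d + 2), β = α/d, k = m α/(2 κ d), and let M = ∫_{ℝ^d} u_BP(x,1) dx. Then the Barenblatt–Pattle solution has a Dirac mass at the origin as initial datum in the weak sense: for every bounded continuous function φ : ℝ^d → ℝ, the integral ∫_{ℝ^d} u_BP(x,t) φ(x) dx tends to M · φ(0) as t → 0⁺. -/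
open MeasureTheory Filter

/-- The Barenblatt–Pattle solution has a Dirac mass of size `M = ∫ u_BP(·,1)` at the
origin as initial datum: integrated against any bounded continuous test function `φ`,
it converges to `M · φ(0)` as `t → 0⁺`. -/
theorem barenblatt_initial_dirac
    (d : ℕ) (hd : 1 ≤ d) (m κ C α β k M : ℝ)
    (hm : 0 < m) (hκ : 0 < κ) (hC : 0 < C)
    (hα : α = d / (m * d + 2)) (hβ : β = α / d) (hk : k = m * α / (2 * κ * d))
    (hM : M = ∫ x : EuclideanSpace ℝ (Fin d), uBP d m C α β k x 1)
    (φ : EuclideanSpace ℝ (Fin d) → ℝ)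
    (hφc : Continuous φ) (hφb : ∃ B : ℝ, ∀ x, |φ x| ≤ B) :
    Tendsto (fun t : ℝ => ∫ x : EuclideanSpace ℝ (Fin d), uBP d m C α β k x t * φ x)
      (nhdsWithin 0 (Set.Ioi 0)) (nhds (M * φ 0)) := by
  obtain ⟨B, hB⟩ := hφb
  have hd0 : (0:ℝ) < d := by exact_mod_cast hd
  have hα0 : 0 < α := by rw [hα]; positivity
  have hβ0 : 0 < β := by rw [hβ]; positivity
  have hk0 : 0 < k := by rw [hk]; positivity
  have hm0 : (1:ℝ)/m ≠ 0 := by positivity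
  set g : EuclideanSpace ℝ (Fin d) → ℝ :=
    fun y => (max (C - k * ‖y‖ ^ 2) 0) ^ ((1:ℝ)/m) with hg_def
  have hg_cont : Continuous g := by
    apply Continuous.rpow_const
    · fun_prop
    · intro x; exact Or.inr (by positivity)
  have hg_nonneg : ∀ y, 0 ≤ g y := fun y => Real.rpow_nonneg (le_max_right _ _) _
  have hg_supp : HasCompactSupport g := by
    apply HasCompactSupport.intro
      (isCompact_closedBall (0 : EuclideanSpace ℝ (Fin d)) (Real.sqrt (C/k)))
    intro y hy
    simp only [Metric.mem_closedBall, dist_zero_right, not_le] at hy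
    have h1 : C / k < ‖y‖ ^ 2 := by
      have := Real.sq_sqrt (show (0:ℝ) ≤ C/k by positivity)
      nlinarith [Real.sqrt_nonneg (C/k), norm_nonneg y]
    have h2 : C - k * ‖y‖ ^ 2 ≤ 0 := by
      rw [div_lt_iff₀ hk0] at h1; nlinarith
    simp only [hg_def, max_eq_right h2, Real.zero_rpow hm0]
  have hg_int : Integrable g := hg_cont.integrable_of_hasCompactSupport hg_supp
  have hg1 : ∀ y : EuclideanSpace ℝ (Fin d), uBP d m C α β k y 1 = g y := by
    intro y
    simp [uBP, hg_def, Real.one_rpow]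
  -- the main scaling identity
  have key : ∀ t ∈ Set.Ioi (0:ℝ),
      ∫ x : EuclideanSpace ℝ (Fin d), uBP d m C α β k x t * φ x
        = ∫ y : EuclideanSpace ℝ (Fin d), g y * φ ((t ^ β) • y) := by
    intro t ht
    have ht0 : (0:ℝ) < t := ht
    have htβ : (0:ℝ) < t ^ β := Real.rpow_pos_of_pos ht0 β
    have hscal : ∀ y : EuclideanSpace ℝ (Fin d),
        uBP d m C α β k ((t ^ β) • y) t = t ^ (-α) * g y := by
      intro y
      have hn : ‖(t ^ β) • y‖ ^ 2 = (t ^ β) ^ 2 * ‖y‖ ^ 2 := by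
        rw [norm_smul, Real.norm_eq_abs, abs_of_pos htβ]; ring
      have hpow : (t ^ β) ^ 2 * t ^ (-(2*β)) = 1 := by
        rw [← Real.rpow_natCast (t ^ β) 2, ← Real.rpow_mul ht0.le,
          ← Real.rpow_add ht0]
        norm_num
        rw [show β * 2 + -(2 * β) = (0:ℝ) by ring, Real.rpow_zero]
      have : k * ‖(t ^ β) • y‖ ^ 2 * t ^ (-(2*β)) = k * ‖y‖ ^ 2 := by
        rw [hn, show k * ((t^β)^2 * ‖y‖^2) * t ^ (-(2*β))
          = k * ‖y‖^2 * ((t^β)^2 * t ^ (-(2*β))) from by ring, hpow, mul_one]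
      simp only [uBP, this, hg_def]
    have hdiv : (t ^ β) ^ d * t ^ (-α) = 1 := by
      have hβd : β * d = α := by
        rw [hβ]; field_simp
      rw [← Real.rpow_natCast (t ^ β) d, ← Real.rpow_mul ht0.le, hβd,
        ← Real.rpow_add ht0]
      simp
    calc ∫ x : EuclideanSpace ℝ (Fin d), uBP d m C α β k x t * φ x
        = |((t ^ β) ^ Module.finrank ℝ (EuclideanSpace ℝ (Fin d)))⁻¹|⁻¹ •
            ∫ y : EuclideanSpace ℝ (Fin d),
              uBP d m C α β k ((t ^ β) • y) t * φ ((t ^ β) • y) := by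
          rw [MeasureTheory.Measure.integral_comp_smul volume
            (fun x : EuclideanSpace ℝ (Fin d) => uBP d m C α β k x t * φ x) (t ^ β),
            smul_smul]
          have hne : |((t ^ β) ^ Module.finrank ℝ (EuclideanSpace ℝ (Fin d)))⁻¹| ≠ 0 := by
            positivity
          rw [inv_mul_cancel₀ hne, one_smul]
      _ = ∫ y : EuclideanSpace ℝ (Fin d), g y * φ ((t ^ β) • y) := by
          have hfr : Module.finrank ℝ (EuclideanSpace ℝ (Fin d)) = d :=
            finrank_euclideanSpace_fin
          simp only [hscal, hfr, smul_eq_mul]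
          rw [abs_of_pos (by positivity), inv_inv]
          simp only [mul_assoc, MeasureTheory.integral_const_mul]
          rw [← mul_assoc, hdiv, one_mul]
  -- dominated convergence
  have hmain : Tendsto
      (fun t : ℝ => ∫ y : EuclideanSpace ℝ (Fin d), g y * φ ((t ^ β) • y))
      (nhdsWithin 0 (Set.Ioi 0)) (nhds (M * φ 0)) := by
    have hMg : M = ∫ y : EuclideanSpace ℝ (Fin d), g y := by
      rw [hM]; exact integral_congr_ae (Filter.Eventually.of_forall hg1)
    have hlim : (M * φ 0) = ∫ y : EuclideanSpace ℝ (Fin d), g y * φ 0 := by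
      rw [hMg, MeasureTheory.integral_mul_const]
    rw [hlim]
    apply MeasureTheory.tendsto_integral_filter_of_dominated_convergence
      (fun y => g y * B)
    · filter_upwards with t
      exact ((hg_cont.mul (hφc.comp (by fun_prop))).aestronglyMeasurable)
    · filter_upwards with t
      filter_upwards with y
      rw [Real.norm_eq_abs, abs_mul, abs_of_nonneg (hg_nonneg y)]
      exact mul_le_mul_of_nonneg_left (hB _) (hg_nonneg y)
    · exact hg_int.mul_const B
    · filter_upwards with y
      have h1 : Tendsto (fun t : ℝ => t ^ β) (nhdsWithin 0 (Set.Ioi 0)) (nhds 0) := by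
        have := (Real.continuousAt_rpow_const 0 β (Or.inr hβ0.le)).tendsto
        rw [Real.zero_rpow hβ0.ne'] at this
        exact this.mono_left nhdsWithin_le_nhds
      have h2 : Tendsto (fun t : ℝ => (t ^ β) • y) (nhdsWithin 0 (Set.Ioi 0))
          (nhds (0 : EuclideanSpace ℝ (Fin d))) := by
        have hc : Continuous (fun c : ℝ => c • y) := by fun_prop
        have := (hc.tendsto 0).comp h1
        simpa [Function.comp_def] using this
      exact tendsto_const_nhds.mul ((hφc.tendsto 0).comp h2)
  refine hmain.congr' ?_
  filter_upwards [eventually_mem_nhdsWithin] with t ht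
  exact (key t ht).symm
end
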